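/- If an ℝ-valued quiver Q (equivalently a real skew-symmetric matrix Q = (q_ij)) is of quasi-integer type, then every weight satisfies q_ij² ∈ ℤ, and for every chordless cycle (k_0, k_1, ..., k_r) with k_0 = k_r in the underlying graph of Q, the product ∏_{j=1}^r q_{k_{j-1} k_j} is an integer. -/

import Mathlib

open Matrix

noncomputable section

/-- A real matrix `B` is of quasi-integer type if `H B H⁻¹` has integer entries for some
positive diagonal matrix `H`. -/
def QuasiInteger {n : ℕ} (B : Matrix (Fin n) (Fin n) ℝ) : Prop :=
  ∃ h : Fin n → ℝ, (∀ i, 0 < h i) ∧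
    ∀ i j, ∃ m : ℤ,
      (Matrix.diagonal h * B * Matrix.diagonal (fun i => (h i)⁻¹)) i j = (m : ℝ)

lemma tele_prod (f : ℕ → ℝ) (hf : ∀ j, f j ≠ 0) (r : ℕ) :
    ∏ j ∈ Finset.range r, (f j * (f (j + 1))⁻¹) = f 0 * (f r)⁻¹ := by
  induction r with
  | zero => simp [hf 0]
  | succ r ih =>
    rw [Finset.prod_range_succ, ih]
    field_simp
    rw [div_eq_div_iff (mul_ne_zero (hf r) (hf (r+1))) (hf (r+1))]
    ring

/-- if a real skew-symmetric matrix `Q` (an ℝ-valued quiver) is of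
quasi-integer type, then every weight squares to an integer, and the product of the
weights along every chordless cycle (a cycle of its underlying graph) is an integer. -/
theorem stmt7 {n : ℕ} (Q : Matrix (Fin n) (Fin n) ℝ)
    (hQ : Qᵀ = -Q) (hqi : QuasiInteger Q) :
    (∀ i j, ∃ m : ℤ, Q i j ^ 2 = (m : ℝ)) ∧
    (∀ (r : ℕ), 1 ≤ r → ∀ k : ℕ → Fin n, k 0 = k r →
      (∀ j < r, Q (k j) (k (j + 1)) ≠ 0) →
      (∀ a b, a < r → b < r → k a = k b → a = b) →
      ∃ m : ℤ, ∏ j ∈ Finset.range r, Q (k j) (k (j + 1)) = (m : ℝ)) := by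
  obtain ⟨h, hpos, hm⟩ := hqi
  have hne : ∀ i, h i ≠ 0 := fun i => (hpos i).ne'
  have key : ∀ i j, ∃ m : ℤ, h i * Q i j * (h j)⁻¹ = (m : ℝ) := by
    intro i j
    obtain ⟨m, hm⟩ := hm i j
    refine ⟨m, ?_⟩
    rw [← hm, Matrix.mul_diagonal, Matrix.diagonal_mul]
  have hski : ∀ i j, Q j i = -Q i j := by
    intro i j
    have := congrFun (congrFun hQ i) j
    simpa [Matrix.transpose_apply] using this
  constructor
  · intro i j
    obtain ⟨a, ha⟩ := key i j
    obtain ⟨b, hb⟩ := key j i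
    refine ⟨-(a * b), ?_⟩
    push_cast
    rw [← ha, ← hb, hski i j]
    field_simp
    rw [eq_div_iff (mul_ne_zero (hne i) (hne j))]
    ring
  · intro r _ k hk _ _
    choose M hM using fun j => key (k j) (k (j + 1))
    refine ⟨∏ j ∈ Finset.range r, M j, ?_⟩
    push_cast
    have : ∀ j ∈ Finset.range r,
        (M j : ℝ) = (h (k j) * (h (k (j + 1)))⁻¹) * Q (k j) (k (j + 1)) := by
      intro j _
      rw [← hM j]; ring
    rw [Finset.prod_congr rfl this, Finset.prod_mul_distrib,
      tele_prod (fun j => h (k j)) (fun j => hne (k j)) r]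
    simp [← hk, hne (k 0)]
end
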